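/- If (αβ/(1+β))^(1/β) ≤ 1, then x* = (αβ/(1+β))^(1/β) is the unique critical point of f(x | α, β) on (0,1), and f is increasing on (0, x*) and decreasing on (x*, 1). -/

import Mathlib

open Real

lemma ug_hasDerivAt (α β : ℝ) {x : ℝ} (hx : 0 < x) :
    HasDerivAt (fun y => α * β * Real.exp (-α * (1 / y ^ β - 1)) / y ^ (1 + β))
      (α * β * Real.exp (-α * (1 / x ^ β - 1)) / x ^ (1 + β) *
        ((α * β / x ^ β - (1 + β)) / x)) x := by
  have hxβ : (0:ℝ) < x ^ β := Real.rpow_pos_of_pos hx β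
  have h1 : HasDerivAt (fun y : ℝ => y ^ β) (β * x ^ (β - 1)) x :=
    Real.hasDerivAt_rpow_const (Or.inl hx.ne')
  have h2 : HasDerivAt (fun y : ℝ => 1 / y ^ β) (-(β * x ^ (β - 1)) / (x ^ β) ^ 2) x := by
    simpa [one_div, div_eq_mul_inv] using h1.fun_inv hxβ.ne'
  have h3 : HasDerivAt (fun y : ℝ => Real.exp (-α * (1 / y ^ β - 1)))
      (Real.exp (-α * (1 / x ^ β - 1)) * (-α * (-(β * x ^ (β - 1)) / (x ^ β) ^ 2))) x :=
    (((h2.sub_const 1).const_mul (-α)).exp)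
  have h4 : HasDerivAt (fun y : ℝ => y ^ (1 + β)) ((1 + β) * x ^ (1 + β - 1)) x :=
    Real.hasDerivAt_rpow_const (Or.inl hx.ne')
  have hx1β : (0:ℝ) < x ^ (1 + β) := Real.rpow_pos_of_pos hx _
  have h5 : HasDerivAt (fun y => α * β * Real.exp (-α * (1 / y ^ β - 1)) / y ^ (1 + β)) _ x :=
    (h3.const_mul (α * β)).fun_div h4 hx1β.ne'
  convert h5 using 1
  have e1 : x ^ (β - 1) = x ^ β / x := by
    rw [Real.rpow_sub hx, Real.rpow_one]
  have e2 : x ^ (1 + β - 1) = x ^ β := by norm_num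
  have e3 : x ^ (1 + β) = x * x ^ β := by
    rw [Real.rpow_add hx, Real.rpow_one]
  rw [e1, e2, e3]
  field_simp

theorem unitGompertz_mode_interior (α β : ℝ) (hα : 0 < α) (hβ : 0 < β)
    (h : (α * β / (1 + β)) ^ (1 / β) ≤ 1) :
    let f : ℝ → ℝ := fun y => α * β * Real.exp (-α * (1 / y ^ β - 1)) / y ^ (1 + β)
    let xstar : ℝ := (α * β / (1 + β)) ^ (1 / β)
    deriv f xstar = 0 ∧
    (∀ x ∈ Set.Ioo (0:ℝ) 1, deriv f x = 0 → x = xstar) ∧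
    StrictMonoOn f (Set.Ioo (0:ℝ) xstar) ∧
    StrictAntiOn f (Set.Ioo xstar 1) := by
  intro f xstar
  have h1β : (0:ℝ) < 1 + β := by linarith
  have hc : (0:ℝ) < α * β / (1 + β) := by positivity
  have hxs : 0 < xstar := Real.rpow_pos_of_pos hc _
  have hxsβ : xstar ^ β = α * β / (1 + β) := by
    show ((α * β / (1 + β)) ^ (1 / β)) ^ β = _
    rw [one_div]
    exact Real.rpow_inv_rpow hc.le hβ.ne'
  have hfpos : ∀ x : ℝ, 0 < x → 0 < f x := by
    intro x hx
    have := Real.rpow_pos_of_pos hx (1 + β)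
    have := Real.exp_pos (-α * (1 / x ^ β - 1))
    positivity
  have hderiv : ∀ x : ℝ, 0 < x →
      deriv f x = f x * ((α * β / x ^ β - (1 + β)) / x) := by
    intro x hx
    exact (ug_hasDerivAt α β hx).deriv
  have hsign : ∀ x : ℝ, 0 < x →
      (α * β / x ^ β - (1 + β)) = (1 + β) * (xstar ^ β - x ^ β) / x ^ β := by
    intro x hx
    have hxβ : (0:ℝ) < x ^ β := Real.rpow_pos_of_pos hx β
    rw [hxsβ]
    field_simp
  refine ⟨?_, ?_, ?_, ?_⟩
  · rw [hderiv xstar hxs, hsign xstar hxs]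
    simp
  · rintro x ⟨hx0, _⟩ hdx
    rw [hderiv x hx0] at hdx
    have hfx := hfpos x hx0
    have : (α * β / x ^ β - (1 + β)) / x = 0 := by
      rcases mul_eq_zero.mp hdx with h' | h'
      · exact absurd h' hfx.ne'
      · exact h'
    have hxβ : (0:ℝ) < x ^ β := Real.rpow_pos_of_pos hx0 β
    have hsub : α * β / x ^ β - (1 + β) = 0 := by
      rcases div_eq_zero_iff.mp this with h' | h'
      · exact h'
      · exact absurd h' hx0.ne'
    have hxβeq : x ^ β = xstar ^ β := by
      rw [hxsβ]
      have : α * β / x ^ β = 1 + β := by linarith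
      field_simp at this ⊢
      linarith
    have : (x ^ β) ^ (β⁻¹) = (xstar ^ β) ^ (β⁻¹) := by rw [hxβeq]
    rwa [Real.rpow_rpow_inv hx0.le hβ.ne', Real.rpow_rpow_inv hxs.le hβ.ne'] at this
  · apply strictMonoOn_of_deriv_pos (convex_Ioo _ _)
    · intro x hx
      exact (ug_hasDerivAt α β hx.1).continuousAt.continuousWithinAt
    · intro x hx
      rw [interior_Ioo] at hx
      obtain ⟨hx0, hx1⟩ := hx
      rw [hderiv x hx0, hsign x hx0]
      have hxβ : (0:ℝ) < x ^ β := Real.rpow_pos_of_pos hx0 β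
      have hlt : x ^ β < xstar ^ β := Real.rpow_lt_rpow hx0.le hx1 hβ
      have hpos : 0 < (1 + β) * (xstar ^ β - x ^ β) / x ^ β :=
        div_pos (mul_pos h1β (by linarith)) hxβ
      exact mul_pos (hfpos x hx0) (div_pos hpos hx0)
  · apply strictAntiOn_of_deriv_neg (convex_Ioo _ _)
    · intro x hx
      have hx0 : 0 < x := lt_trans hxs hx.1
      exact (ug_hasDerivAt α β hx0).continuousAt.continuousWithinAt
    · intro x hx
      rw [interior_Ioo] at hx
      obtain ⟨hx1, hx2⟩ := hx
      have hx0 : 0 < x := lt_trans hxs hx1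
      rw [hderiv x hx0, hsign x hx0]
      have hxβ : (0:ℝ) < x ^ β := Real.rpow_pos_of_pos hx0 β
      have hlt : xstar ^ β < x ^ β := Real.rpow_lt_rpow hxs.le hx1 hβ
      have hneg : (1 + β) * (xstar ^ β - x ^ β) / x ^ β < 0 := by
        apply div_neg_of_neg_of_pos _ hxβ
        apply mul_neg_of_pos_of_neg h1β
        linarith
      have hneg2 : ((1 + β) * (xstar ^ β - x ^ β) / x ^ β) / x < 0 :=
        div_neg_of_neg_of_pos hneg hx0
      exact mul_neg_of_pos_of_neg (hfpos x hx0) hneg2
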